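/- Let S be a cancellative commutative Hausdorff topological semigroup with open shifts, and let ⟨S⟩* denote the group of fractions ⟨S⟩ with the quotient topology induced by π: S × S → ⟨S⟩. Then ⟨S⟩* is a Hausdorff topological group and the quotient map π is open; moreover, if S has continuous division, then ι: S → ι(S) is a homeomorphism and ι(S) is open in ⟨S⟩*. -/

import Mathlib

/-- The quotient topology on the group of fractions `G = ⟨S⟩`, i.e. the topology
coinduced from the product topology on `S × S` by the quotient map
`π (a, b) = ι a * (ι b)⁻¹`. -/
def fractionGroupQuotientTopology {S : Type*} [Mul S] [TopologicalSpace S]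
    {G : Type*} [CommGroup G] (ι : S →ₙ* G) : TopologicalSpace G :=
  TopologicalSpace.coinduced (fun p : S × S => ι p.1 * (ι p.2)⁻¹) inferInstance

/-- Let `S` be a cancellative commutative Hausdorff topological semigroup
with open shifts, and `⟨S⟩* = (G, τq)` its group of fractions with the quotient topology
induced by `π : S × S → G`. Then `⟨S⟩*` is a Hausdorff topological group and `π` is open;
moreover, if `S` has continuous division then `ι` is a homeomorphism onto `ι(S)` and
`ι(S)` is open in `⟨S⟩*`. -/
theorem fractionGroupQuotient_t2_topologicalGroup_and_open_quotient
    {S : Type*} [CommSemigroup S] [IsCancelMul S] [TopologicalSpace S]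
    [T2Space S] [ContinuousMul S]
    (ho : ∀ a : S, IsOpenMap fun s : S => a * s)
    {G : Type*} [CommGroup G] (ι : S →ₙ* G)
    (hinj : Function.Injective ι)
    (hgen : ∀ g : G, ∃ a b : S, g = ι a * (ι b)⁻¹) :
    @IsTopologicalGroup G (fractionGroupQuotientTopology ι) _ ∧
    @T2Space G (fractionGroupQuotientTopology ι) ∧
    @IsOpenMap (S × S) G _ (fractionGroupQuotientTopology ι)
      (fun p : S × S => ι p.1 * (ι p.2)⁻¹) ∧
    ((∀ x y : S, ∀ V : Set S, IsOpen V → y ∈ V →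
        ∃ U W : Set S, IsOpen U ∧ IsOpen W ∧ x ∈ U ∧ x * y ∈ W ∧
          ∀ u ∈ U, W ⊆ (fun v => u * v) '' V) →
      @Topology.IsEmbedding S G _ (fractionGroupQuotientTopology ι) ι ∧
      @IsOpen G (fractionGroupQuotientTopology ι) (Set.range ι)) := by
  letI τ : TopologicalSpace G := fractionGroupQuotientTopology ι
  set π : S × S → G := fun p => ι p.1 * (ι p.2)⁻¹ with hπdef
  -- basic algebra
  have key : ∀ a b u v : S, π (a, b) = π (u, v) ↔ a * v = u * b := by
    intro a b u v
    show ι a * (ι b)⁻¹ = ι u * (ι v)⁻¹ ↔ _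
    rw [← div_eq_mul_inv, ← div_eq_mul_inv, div_eq_div_iff_mul_eq_mul,
      ← map_mul, ← map_mul, hinj.eq_iff]
  have hπcont : Continuous π := continuous_coinduced_rng
  have hπsurj : Function.Surjective π := by
    intro g; obtain ⟨a, b, h⟩ := hgen g; exact ⟨(a, b), h.symm⟩
  -- right shifts are open
  have ho' : ∀ a : S, IsOpenMap fun s : S => s * a := by
    intro a
    have : (fun s : S => s * a) = fun s : S => a * s := by
      funext s; exact mul_comm s a
    rw [this]; exact ho a
  -- π is open
  have hopen : IsOpenMap π := by
    intro W hW
    show IsOpen (π ⁻¹' (π '' W))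
    rw [isOpen_iff_forall_mem_open]
    rintro ⟨a, b⟩ hab
    obtain ⟨⟨u, v⟩, huv, heq⟩ := hab
    have hav : a * v = u * b := ((key a b u v).mp heq.symm)
    -- gW = image of W under (·*b, ·*b)
    set gW : Set (S × S) := (fun q : S × S => (q.1 * b, q.2 * b)) '' W with hgW
    have hgWopen : IsOpen gW := by
      have : (fun q : S × S => (q.1 * b, q.2 * b)) = Prod.map (fun s => s * b) (fun s => s * b) := rfl
      rw [hgW, this]
      exact (ho' b).prodMap (ho' b) W hW
    set h : S × S → S × S := fun p => (p.1 * v, v * p.2) with hh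
    have hhcont : Continuous h := by fun_prop
    refine ⟨h ⁻¹' gW, ?_, hhcont.isOpen_preimage _ hgWopen, ?_⟩
    · rintro ⟨a', b'⟩ hmem
      obtain ⟨⟨u', v'⟩, hu'v', heq'⟩ := hmem
      have h1 : u' * b = a' * v := congrArg Prod.fst heq'
      have h2 : v' * b = v * b' := congrArg Prod.snd heq'
      have h3 : a' * v' = u' * b' := by
        have e : (a' * v') * (v * b) = (u' * b') * (v * b) := by
          calc (a' * v') * (v * b) = (a' * v) * (v' * b) := by
                simp only [mul_assoc, mul_comm, mul_left_comm]
            _ = (u' * b) * (v * b') := by rw [← h1, h2]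
            _ = (u' * b') * (v * b) := by
                simp only [mul_assoc, mul_comm, mul_left_comm]
        exact mul_right_cancel e
      exact ⟨(u', v'), hu'v', ((key a' b' u' v').mpr h3).symm⟩
    · show h (a, b) ∈ gW
      refine ⟨(u, v), huv, ?_⟩
      show ((u * b, v * b) : S × S) = (a * v, v * b)
      rw [hav]
  have hoq : IsOpenQuotientMap π := ⟨hπsurj, hπcont, hopen⟩
  -- topological group
  have hcontinv : Continuous (fun g : G => g⁻¹) := by
    refine continuous_coinduced_dom.mpr ?_
    have : ((fun g : G => g⁻¹) ∘ fun p : S × S => ι p.1 * (ι p.2)⁻¹)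
        = fun p : S × S => π (p.2, p.1) := by
      funext p; simp [hπdef, mul_comm]
    rw [this]
    exact hπcont.comp (continuous_snd.prodMk continuous_fst)
  have hcontmul : Continuous (fun p : G × G => p.1 * p.2) := by
    rw [(hoq.prodMap hoq).isQuotientMap.continuous_iff]
    have : ((fun p : G × G => p.1 * p.2) ∘ Prod.map π π)
        = fun q : (S × S) × (S × S) => π (q.1.1 * q.2.1, q.1.2 * q.2.2) := by
      funext q
      show π q.1 * π q.2 = π (q.1.1 * q.2.1, q.1.2 * q.2.2)
      simp only [hπdef, map_mul, mul_inv]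
      simp only [mul_assoc, mul_comm, mul_left_comm]
    rw [this]
    exact hπcont.comp (by fun_prop)
  have htg : @IsTopologicalGroup G τ _ :=
    { continuous_mul := hcontmul
      continuous_inv := hcontinv }
  haveI := htg
  have ht2 : @T2Space G τ := by
    rw [IsTopologicalGroup.t2Space_iff_one_closed (G := G)]
    constructor
    show IsOpen ((fun p : S × S => ι p.1 * (ι p.2)⁻¹) ⁻¹' ({1} : Set G)ᶜ)
    have : (fun p : S × S => ι p.1 * (ι p.2)⁻¹) ⁻¹' ({1} : Set G)ᶜ
        = {p : S × S | p.1 ≠ p.2} := by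
      ext ⟨a, b⟩
      simp only [Set.mem_preimage, Set.mem_compl_iff, Set.mem_singleton_iff, Set.mem_setOf_eq]
      rw [mul_inv_eq_one]
      exact not_congr ⟨fun h => hinj h, fun h => by rw [h]⟩
    rw [this]
    exact (isClosed_eq continuous_fst continuous_snd).isOpen_compl
  refine ⟨htg, ht2, hopen, ?_⟩
  -- continuous division part
  intro hdiv
  obtain ⟨c, _, _⟩ := hgen 1
  have hιcont : Continuous (ι : S → G) := by
    have : (ι : S → G) = fun s => π (s * c, c) := by
      funext s
      simp [hπdef, map_mul, mul_assoc]
    rw [this]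
    exact hπcont.comp (by fun_prop)
  have hιopen : IsOpenMap (ι : S → G) := by
    intro U hU
    show IsOpen ((fun p : S × S => ι p.1 * (ι p.2)⁻¹) ⁻¹' (ι '' U))
    rw [isOpen_iff_forall_mem_open]
    rintro ⟨a, b⟩ hab
    obtain ⟨u, hu, heq⟩ := hab
    have hab' : a = u * b := by
      apply hinj
      rw [map_mul, heq, inv_mul_cancel_right]
    obtain ⟨U', W, hU'o, hWo, hbU', hbuW, hsub⟩ := hdiv b u U hU hu
    refine ⟨W ×ˢ U', ?_, hWo.prod hU'o, ?_, ?_⟩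
    · rintro ⟨a', b'⟩ ⟨ha'W, hb'U'⟩
      obtain ⟨u', hu', hequ'⟩ := hsub b' hb'U' ha'W
      refine ⟨u', hu', ?_⟩
      have hba : u' * b' = a' := by rw [mul_comm]; exact hequ'
      show ι u' = ι a' * (ι b')⁻¹
      rw [eq_mul_inv_iff_mul_eq, ← map_mul, hba]
    · rw [hab']; rw [mul_comm b u] at hbuW; exact hbuW
    · exact hbU'
  have hemb : @Topology.IsOpenEmbedding S G _ τ ι :=
    Topology.IsOpenEmbedding.of_continuous_injective_isOpenMap hιcont hinj hιopen
  exact ⟨hemb.toIsEmbedding, hemb.isOpen_range⟩
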